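/- Any spherical polygon in S² (closed curve made of finitely many spherical segments, each of length in (0,π)) has total length at least 2π provided the origin lies in the convex hull of the polygon. Equivalently: if u_0,...,u_{n-1} ∈ S² satisfy 0 ∈ conv{u_0,...,u_{n-1}}, then ∑_i d(u_{i−1},u_i) ≥ 2π, where d is spherical distance and indices are mod n. -/

import Mathlib

open Real
open scoped RealInnerProductSpace

/-- The spherical (geodesic) distance between unit vectors. -/
noncomputable def sdist (u v : EuclideanSpace ℝ (Fin 3)) : ℝ :=
  Real.arccos ⟪u, v⟫

namespace SphericalFenchel

local notation "E3" => EuclideanSpace ℝ (Fin 3)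

lemma arccos_le_arccos {x y : ℝ} (h : x ≤ y) : Real.arccos y ≤ Real.arccos x := by
  rw [Real.arccos, Real.arccos]
  have := Real.monotone_arcsin h
  linarith

lemma abs_inner_le_one {u v : E3} (hu : ‖u‖ = 1) (hv : ‖v‖ = 1) : |⟪u, v⟫| ≤ 1 := by
  have := abs_real_inner_le_norm u v
  rwa [hu, hv, one_mul] at this

lemma sdist_nonneg (u v : E3) : 0 ≤ sdist u v := Real.arccos_nonneg _

lemma sdist_le_pi (u v : E3) : sdist u v ≤ π := Real.arccos_le_pi _

lemma sdist_self {u : E3} (hu : ‖u‖ = 1) : sdist u u = 0 := by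
  have : ⟪u, u⟫ = 1 := by
    rw [real_inner_self_eq_norm_sq, hu]; norm_num
  rw [sdist, this, Real.arccos_one]

lemma sdist_neg_self {u : E3} (hu : ‖u‖ = 1) : sdist u (-u) = π := by
  have : ⟪u, -u⟫ = -1 := by
    rw [inner_neg_right, real_inner_self_eq_norm_sq, hu]; norm_num
  rw [sdist, this, Real.arccos_neg_one]

lemma sdist_neg_self' {u : E3} (hu : ‖u‖ = 1) : sdist (-u) u = π := by
  have : ⟪-u, u⟫ = -1 := by
    rw [inner_neg_left, real_inner_self_eq_norm_sq, hu]; norm_num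
  rw [sdist, this, Real.arccos_neg_one]

/-- Triangle inequality for spherical distance between unit vectors. -/
lemma sdist_triangle {u v w : E3} (hu : ‖u‖ = 1) (hv : ‖v‖ = 1) (hw : ‖w‖ = 1) :
    sdist u w ≤ sdist u v + sdist v w := by
  have h1' := abs_le.1 (abs_inner_le_one hu hv)
  have h2' := abs_le.1 (abs_inner_le_one hv hw)
  by_cases hbig : π ≤ sdist u v + sdist v w
  · exact le_trans (sdist_le_pi u w) hbig
  push_neg at hbig
  have hAB0 : 0 ≤ sdist u v + sdist v w :=
    add_nonneg (sdist_nonneg _ _) (sdist_nonneg _ _)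
  have huu : ⟪u, u⟫ = 1 := by rw [real_inner_self_eq_norm_sq, hu]; norm_num
  have hvv : ⟪v, v⟫ = 1 := by rw [real_inner_self_eq_norm_sq, hv]; norm_num
  have hww : ⟪w, w⟫ = 1 := by rw [real_inner_self_eq_norm_sq, hw]; norm_num
  -- key inequality : cos (A + B) ≤ ⟪u, w⟫
  have key : Real.cos (sdist u v + sdist v w) ≤ ⟪u, w⟫ := by
    rw [Real.cos_add]
    show Real.cos (Real.arccos ⟪u, v⟫) * Real.cos (Real.arccos ⟪v, w⟫) -
        Real.sin (Real.arccos ⟪u, v⟫) * Real.sin (Real.arccos ⟪v, w⟫) ≤ _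
    rw [Real.cos_arccos h1'.1 h1'.2, Real.cos_arccos h2'.1 h2'.2,
      Real.sin_arccos, Real.sin_arccos]
    have hn1 : ‖u - ⟪u, v⟫ • v‖ = Real.sqrt (1 - ⟪u, v⟫ ^ 2) := by
      rw [← Real.sqrt_sq (norm_nonneg (u - ⟪u, v⟫ • v))]
      congr 1
      rw [← real_inner_self_eq_norm_sq]
      simp only [inner_sub_left, inner_sub_right, real_inner_smul_left,
        real_inner_smul_right, huu, hvv, real_inner_comm u v]
      ring
    have hn2 : ‖w - ⟪v, w⟫ • v‖ = Real.sqrt (1 - ⟪v, w⟫ ^ 2) := by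
      rw [← Real.sqrt_sq (norm_nonneg (w - ⟪v, w⟫ • v))]
      congr 1
      rw [← real_inner_self_eq_norm_sq]
      simp only [inner_sub_left, inner_sub_right, real_inner_smul_left,
        real_inner_smul_right, hww, hvv, real_inner_comm w v]
      ring
    have hexp : ⟪u, w⟫ - ⟪u, v⟫ * ⟪v, w⟫ = ⟪u - ⟪u, v⟫ • v, w - ⟪v, w⟫ • v⟫ := by
      simp only [inner_sub_left, inner_sub_right, real_inner_smul_left,
        real_inner_smul_right, hvv, real_inner_comm u v]
      ring
    have hcs : -(‖u - ⟪u, v⟫ • v‖ * ‖w - ⟪v, w⟫ • v‖) ≤ ⟪u - ⟪u, v⟫ • v, w - ⟪v, w⟫ • v⟫ :=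
      neg_le_of_abs_le (abs_real_inner_le_norm _ _)
    rw [hn1, hn2] at hcs
    linarith [hexp ▸ hcs]
  calc sdist u w = Real.arccos ⟪u, w⟫ := rfl
    _ ≤ Real.arccos (Real.cos (sdist u v + sdist v w)) := arccos_le_arccos key
    _ = sdist u v + sdist v w := Real.arccos_cos hAB0 hbig.le

/-- Geodesic additivity: if `m` is a positive multiple of a nonnegative combination of
unit vectors `u` and `v`, then `m` lies on the minimizing geodesic from `u` to `v`. -/
lemma sdist_add_of_between {u v m : E3} {a b t : ℝ} (hu : ‖u‖ = 1) (hv : ‖v‖ = 1)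
    (hm : ‖m‖ = 1) (ha : 0 ≤ a) (hb : 0 ≤ b) (ht : 0 < t)
    (hcomb : t • m = a • u + b • v) :
    sdist u m + sdist m v = sdist u v := by
  have hc1' := abs_le.1 (abs_inner_le_one hu hv)
  have huu : ⟪u, u⟫ = 1 := by rw [real_inner_self_eq_norm_sq, hu]; norm_num
  have hvv : ⟪v, v⟫ = 1 := by rw [real_inner_self_eq_norm_sq, hv]; norm_num
  have htne : t ≠ 0 := ne_of_gt ht
  -- inner products with m
  have hum : t * ⟪u, m⟫ = a + b * ⟪u, v⟫ := by
    have h : ⟪u, t • m⟫ = ⟪u, a • u + b • v⟫ := by rw [hcomb]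
    rw [real_inner_smul_right, inner_add_right, real_inner_smul_right,
      real_inner_smul_right, huu] at h
    rw [h]; ring
  have hmv : t * ⟪m, v⟫ = a * ⟪u, v⟫ + b := by
    have h : ⟪t • m, v⟫ = ⟪a • u + b • v, v⟫ := by rw [hcomb]
    rw [real_inner_smul_left, inner_add_left, real_inner_smul_left,
      real_inner_smul_left, hvv] at h
    rw [h]; ring
  have ht2 : t ^ 2 = a ^ 2 + 2 * a * b * ⟪u, v⟫ + b ^ 2 := by
    have h1 : ‖t • m‖ ^ 2 = t ^ 2 := by
      rw [norm_smul, hm, mul_one, Real.norm_eq_abs, sq_abs]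
    have h2 : ‖a • u + b • v‖ ^ 2 = a ^ 2 + 2 * a * b * ⟪u, v⟫ + b ^ 2 := by
      rw [← real_inner_self_eq_norm_sq]
      simp only [inner_add_left, inner_add_right, real_inner_smul_left,
        real_inner_smul_right, huu, hvv, real_inner_comm u v]
      ring
    rw [← h1, hcomb, h2]
  have hium' := abs_le.1 (abs_inner_le_one hu hm)
  have himv' := abs_le.1 (abs_inner_le_one hm hv)
  show Real.arccos ⟪u, m⟫ + Real.arccos ⟪m, v⟫ = Real.arccos ⟪u, v⟫
  -- abstract the three inner products as real numbers
  set c : ℝ := ⟪u, v⟫ with hcdef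
  set x : ℝ := ⟪u, m⟫ with hxdef
  set y : ℝ := ⟪m, v⟫ with hydef
  clear_value c x y
  clear hcomb hcdef hxdef hydef huu hvv hu hv hm
  have hA0 : 0 ≤ Real.arccos x := Real.arccos_nonneg _
  have hB0 : 0 ≤ Real.arccos y := Real.arccos_nonneg _
  -- A + B ≤ π
  have hABpi : Real.arccos x + Real.arccos y ≤ π := by
    have hineq : -x ≤ y := by
      nlinarith [mul_nonneg (add_nonneg ha hb) (by linarith [hc1'.1] : (0:ℝ) ≤ 1 + c)]
    have h1 : Real.arccos y ≤ Real.arccos (-x) := arccos_le_arccos hineq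
    rw [Real.arccos_neg] at h1
    linarith
  have h1c2 : (0:ℝ) ≤ 1 - c ^ 2 := by nlinarith [hc1'.1, hc1'.2]
  -- sines
  have hsinA : Real.sin (Real.arccos x) = Real.sqrt (1 - c ^ 2) * b / t := by
    rw [Real.sin_arccos]
    have h : 1 - x ^ 2 = (1 - c ^ 2) * (b / t) ^ 2 := by
      field_simp
      linear_combination ht2 - (t * x + a + b * c) * hum
    rw [h, Real.sqrt_mul h1c2, Real.sqrt_sq (by positivity : (0:ℝ) ≤ b / t)]
    ring
  have hsinB : Real.sin (Real.arccos y) = Real.sqrt (1 - c ^ 2) * a / t := by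
    rw [Real.sin_arccos]
    have h : 1 - y ^ 2 = (1 - c ^ 2) * (a / t) ^ 2 := by
      field_simp
      linear_combination ht2 - (t * y + a * c + b) * hmv
    rw [h, Real.sqrt_mul h1c2, Real.sqrt_sq (by positivity : (0:ℝ) ≤ a / t)]
    ring
  have hcosAB : Real.cos (Real.arccos x + Real.arccos y) = c := by
    rw [Real.cos_add, Real.cos_arccos hium'.1 hium'.2, Real.cos_arccos himv'.1 himv'.2,
      hsinA, hsinB]
    have hsq : Real.sqrt (1 - c ^ 2) * Real.sqrt (1 - c ^ 2) = 1 - c ^ 2 :=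
      Real.mul_self_sqrt h1c2
    have key : t ^ 2 * (x * y) - (1 - c ^ 2) * a * b = t ^ 2 * c := by
      linear_combination (t * y) * hum + (a + b * c) * hmv - c * ht2
    rw [div_mul_div_comm,
      show (Real.sqrt (1 - c ^ 2) * b) * (Real.sqrt (1 - c ^ 2) * a) = (1 - c ^ 2) * a * b by
        linear_combination a * b * hsq,
      show t * t = t ^ 2 by ring]
    field_simp
    linear_combination key
  have hfin := Real.arccos_cos (by linarith : 0 ≤ Real.arccos x + Real.arccos y) hABpi
  rw [hcosAB] at hfin
  exact hfin.symm

/-- Chaining the triangle inequality along a path. -/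
lemma sdist_le_path (V : ℕ → E3) :
    ∀ j, (∀ i, i ≤ j → ‖V i‖ = 1) →
      sdist (V 0) (V j) ≤ ∑ i ∈ Finset.range j, sdist (V i) (V (i + 1)) := by
  intro j
  induction j with
  | zero => intro h; simp [sdist_self (h 0 le_rfl)]
  | succ k ih =>
    intro h
    have h' : ∀ i, i ≤ k → ‖V i‖ = 1 := fun i hi => h i (hi.trans (Nat.le_succ k))
    calc sdist (V 0) (V (k + 1)) ≤ sdist (V 0) (V k) + sdist (V k) (V (k + 1)) :=
          sdist_triangle (h 0 (Nat.zero_le _)) (h k (Nat.le_succ k)) (h (k + 1) le_rfl)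
      _ ≤ (∑ i ∈ Finset.range k, sdist (V i) (V (i + 1))) + sdist (V k) (V (k + 1)) := by
          linarith [ih h']
      _ = ∑ i ∈ Finset.range (k + 1), sdist (V i) (V (i + 1)) :=
          (Finset.sum_range_succ _ k).symm

/-- Key lemma: if a unit vector `m` is a nonnegative combination of the unit vectors
`V 0, …, V k`, then the length of the path through them dominates
`sdist (V 0) m + sdist m (V k)`. -/
lemma path_ge_through (c : ℕ → ℝ) (hc : ∀ i, 0 ≤ c i) :
    ∀ k, ∀ V : ℕ → E3, (∀ i, i ≤ k → ‖V i‖ = 1) → ∀ m : E3, ‖m‖ = 1 →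
      (∃ r > (0:ℝ), r • m = ∑ i ∈ Finset.range (k + 1), c i • V i) →
      sdist (V 0) m + sdist m (V k) ≤ ∑ i ∈ Finset.range k, sdist (V i) (V (i + 1)) := by
  intro k
  induction k with
  | zero =>
    intro V hV m hm ⟨r, hr, hcomb⟩
    rw [Finset.sum_range_one] at hcomb
    have hV0 : ‖V 0‖ = 1 := hV 0 le_rfl
    have hr' : r = c 0 := by
      have h1 : ‖r • m‖ = r := by rw [norm_smul, hm, mul_one, Real.norm_eq_abs, abs_of_pos hr]
      have h2 : ‖c 0 • V 0‖ = c 0 := by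
        rw [norm_smul, hV0, mul_one, Real.norm_eq_abs, abs_of_nonneg (hc 0)]
      rw [← h1, hcomb, h2]
    have hmV : m = V 0 := by
      have : r • m = r • V 0 := by rw [hcomb, hr']
      exact smul_right_injective _ (ne_of_gt hr) this
    simp [hmV, sdist_self hV0]
  | succ k ih =>
    intro V hV m hm ⟨r, hr, hcomb⟩
    have hV' : ∀ i, i ≤ k → ‖V i‖ = 1 := fun i hi => hV i (hi.trans (Nat.le_succ k))
    rw [Finset.sum_range_succ] at hcomb
    set q : E3 := ∑ i ∈ Finset.range (k + 1), c i • V i with hq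
    by_cases hq0 : q = 0
    · -- then m = V (k+1)
      rw [hq0, zero_add] at hcomb
      have hVk1 : ‖V (k + 1)‖ = 1 := hV (k + 1) le_rfl
      have hr' : r = c (k + 1) := by
        have h1 : ‖r • m‖ = r := by rw [norm_smul, hm, mul_one, Real.norm_eq_abs, abs_of_pos hr]
        have h2 : ‖c (k + 1) • V (k + 1)‖ = c (k + 1) := by
          rw [norm_smul, hVk1, mul_one, Real.norm_eq_abs, abs_of_nonneg (hc _)]
        rw [← h1, hcomb, h2]
      have hmV : m = V (k + 1) := by
        have : r • m = r • V (k + 1) := by rw [hcomb, hr']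
        exact smul_right_injective _ (ne_of_gt hr) this
      have hpath := sdist_le_path V (k + 1) hV
      rw [hmV]
      rw [sdist_self hVk1]
      linarith
    · set m' : E3 := ‖q‖⁻¹ • q with hm'def
      have hqn : (0:ℝ) < ‖q‖ := norm_pos_iff.2 hq0
      have hm' : ‖m'‖ = 1 := by
        rw [hm'def, norm_smul, Real.norm_eq_abs, abs_of_pos (inv_pos.2 hqn),
          inv_mul_cancel₀ (ne_of_gt hqn)]
      have hcomb' : ‖q‖ • m' = q := by
        rw [hm'def, smul_smul, mul_inv_cancel₀ (ne_of_gt hqn), one_smul]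
      have hih := ih V hV' m' hm' ⟨‖q‖, hqn, hcomb'.trans hq⟩
      -- m is between m' and V (k+1)
      have hbet : sdist m' m + sdist m (V (k + 1)) = sdist m' (V (k + 1)) := by
        refine sdist_add_of_between hm' (hV (k + 1) le_rfl) hm (le_of_lt hqn) (hc (k + 1)) hr ?_
        rw [hcomb, hcomb']
      have hV0 : ‖V 0‖ = 1 := hV 0 (Nat.zero_le _)
      have hVk : ‖V k‖ = 1 := hV k (Nat.le_succ k)
      have hVk1 : ‖V (k + 1)‖ = 1 := hV (k + 1) le_rfl
      have t1 : sdist (V 0) m ≤ sdist (V 0) m' + sdist m' m := sdist_triangle hV0 hm' hm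
      have t2 : sdist m' (V (k + 1)) ≤ sdist m' (V k) + sdist (V k) (V (k + 1)) :=
        sdist_triangle hm' hVk hVk1
      rw [Finset.sum_range_succ]
      linarith
  
end SphericalFenchel

/-- Discrete Fenchel inequality on the sphere: if the origin lies in the convex hull of
unit vectors `u 0, …, u (n-1)`, then the total spherical length of the closed spherical
polygon through them is at least `2π`. -/
theorem spherical_perimeter_ge_two_pi {n : ℕ} [NeZero n]
    (u : Fin n → EuclideanSpace ℝ (Fin 3))
    (hu : ∀ i : Fin n, ‖u i‖ = 1)
    (h0 : (0 : EuclideanSpace ℝ (Fin 3)) ∈ convexHull ℝ (Set.range u)) :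
    2 * π ≤ ∑ i : Fin n, sdist (u (i - 1)) (u i) := by
  classical
  rcases Nat.lt_or_ge n 2 with hn | hn
  · -- n = 1 : impossible, since then u 0 = 0
    have hpos : 0 < n := Nat.pos_of_ne_zero (NeZero.ne n)
    have hn1 : n = 1 := by omega
    subst hn1
    have hrange : Set.range u = {u 0} := by
      ext x
      simp only [Set.mem_range, Set.mem_singleton_iff]
      constructor
      · rintro ⟨j, rfl⟩; exact congrArg u (Subsingleton.elim j 0)
      · rintro rfl; exact ⟨0, rfl⟩
    rw [hrange, convexHull_singleton, Set.mem_singleton_iff] at h0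
    have := hu 0
    rw [← h0, norm_zero] at this
    norm_num at this
  -- main case : n ≥ 2
  obtain ⟨k, rfl⟩ : ∃ k, n = k + 2 := ⟨n - 2, by omega⟩
  -- Step 1 : extract convex-combination weights indexed by `Fin (k+2)`
  obtain ⟨ι, hι, w, z, hw0, hw1, hz, hsum⟩ := mem_convexHull_iff_exists_fintype.1 h0
  choose f hf using hz
  set W : Fin (k + 2) → ℝ := fun j => ∑ i ∈ Finset.univ.filter (fun i => f i = j), w i with hW
  have hW0 : ∀ j, 0 ≤ W j := fun j => Finset.sum_nonneg fun i _ => hw0 i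
  have hW1 : ∑ j, W j = 1 := by
    rw [← hw1]
    exact Finset.sum_fiberwise _ f w
  have hWsum : ∑ j, W j • u j = 0 := by
    rw [← hsum]
    calc ∑ j, W j • u j
        = ∑ j, ∑ i ∈ Finset.univ.filter (fun i => f i = j), w i • u j := by
          refine Finset.sum_congr rfl fun j _ => ?_
          rw [hW, Finset.sum_smul]
      _ = ∑ j, ∑ i ∈ Finset.univ.filter (fun i => f i = j), w i • z i := by
          refine Finset.sum_congr rfl fun j _ => Finset.sum_congr rfl fun i hi => ?_
          rw [← hf i, (Finset.mem_filter.1 hi).2]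
      _ = ∑ i, w i • z i := Finset.sum_fiberwise _ f _
  -- Step 2 : pick an index with positive weight and rotate the polygon
  have hWne : ∑ j, W j ≠ 0 := by rw [hW1]; norm_num
  obtain ⟨j0, -, hj0⟩ := Finset.exists_ne_zero_of_sum_ne_zero hWne
  have hj0' : 0 < W j0 := lt_of_le_of_ne (hW0 j0) (Ne.symm hj0)
  set v : Fin (k + 2) → EuclideanSpace ℝ (Fin 3) := fun i => u (i + j0) with hv
  set ω : Fin (k + 2) → ℝ := fun i => W (i + j0) with hω
  have hvu : ∀ i, ‖v i‖ = 1 := fun i => hu _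
  have hper : ∑ i : Fin (k + 2), sdist (u (i - 1)) (u i)
      = ∑ i : Fin (k + 2), sdist (v (i - 1)) (v i) := by
    refine (Fintype.sum_equiv (Equiv.addRight j0)
      (fun i => sdist (v (i - 1)) (v i)) (fun x => sdist (u (x - 1)) (u x)) fun i => ?_).symm
    simp only [hv, Equiv.coe_addRight]
    have : i - 1 + j0 = i + j0 - 1 := by open Fin.CommRing in ring
    rw [this]
  have hω0 : 0 < ω 0 := by
    have : ω 0 = W j0 := by rw [hω]; simp
    rw [this]; exact hj0'
  have hωnn : ∀ i, 0 ≤ ω i := fun i => hW0 _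
  have hωsum : ∑ i : Fin (k + 2), ω i • v i = 0 := by
    rw [← hWsum]
    exact Fintype.sum_equiv (Equiv.addRight j0) _ _ fun i => rfl
  -- Step 3 : set up the ℕ-indexed path `v 1, v 2, …, v (k+1)`
  open Fin.NatCast Fin.CommRing in
  set V : ℕ → EuclideanSpace ℝ (Fin 3) := fun i => v (((i + 1 : ℕ) : Fin (k + 2))) with hVdef
  open Fin.NatCast Fin.CommRing in
  set cc : ℕ → ℝ := fun i => ω (((i + 1 : ℕ) : Fin (k + 2))) with hccdef
  have hVnorm : ∀ i, i ≤ k → ‖V i‖ = 1 := fun i _ => hvu _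
  have hccnn : ∀ i, 0 ≤ cc i := fun i => hωnn _
  open Fin.NatCast Fin.CommRing in
  have hsplit : ω 0 • (-(v 0)) = ∑ i ∈ Finset.range (k + 1), cc i • V i := by
    have h1 : ∑ i ∈ Finset.range (k + 2), ω (i : Fin (k + 2)) • v (i : Fin (k + 2)) = 0 := by
      rw [← Fin.sum_univ_eq_sum_range
        (fun j : ℕ => ω (j : Fin (k + 2)) • v (j : Fin (k + 2))) (k + 2), ← hωsum]
      exact Fintype.sum_congr _ _ fun i => by rw [Fin.cast_val_eq_self]
    have hr1 : ∑ i ∈ Finset.range (k + 2), ω (i : Fin (k + 2)) • v (i : Fin (k + 2))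
        = (∑ i ∈ Finset.range (k + 1),
            ω ((i + 1 : ℕ) : Fin (k + 2)) • v ((i + 1 : ℕ) : Fin (k + 2)))
          + ω ((0 : ℕ) : Fin (k + 2)) • v ((0 : ℕ) : Fin (k + 2)) :=
      Finset.sum_range_succ' (fun j : ℕ => ω (j : Fin (k + 2)) • v (j : Fin (k + 2))) (k + 1)
    rw [hr1, Nat.cast_zero] at h1
    rw [smul_neg]
    rw [add_eq_zero_iff_eq_neg] at h1
    exact h1.symm
  have hnegnorm : ‖-(v 0)‖ = 1 := by rw [norm_neg]; exact hvu 0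
  have hmain := SphericalFenchel.path_ge_through cc hccnn k V hVnorm (-(v 0)) hnegnorm
    ⟨ω 0, hω0, hsplit⟩
  have hV0 : V 0 = v 1 := by simp only [hVdef]; norm_num
  open Fin.NatCast Fin.CommRing in
  have hVlast : V k = v (0 - 1) := by
    simp only [hVdef]
    have h1 : ((k + 1 : ℕ) : Fin (k + 2)) = 0 - 1 := by
      have h2 : ((k + 1 : ℕ) : Fin (k + 2)) = ((k + 2 : ℕ) : Fin (k + 2)) - 1 := by
        push_cast
        ring
      rw [h2, Fin.natCast_self]
    rw [h1]
  rw [hV0, hVlast] at hmain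
  -- Step 4 : decompose the perimeter
  open Fin.NatCast Fin.CommRing in
  have hperim : ∑ i : Fin (k + 2), sdist (v (i - 1)) (v i)
      = (∑ i ∈ Finset.range k, sdist (V i) (V (i + 1)))
        + sdist (v 0) (v 1) + sdist (v (0 - 1)) (v 0) := by
    have hfin : ∑ i : Fin (k + 2), sdist (v (i - 1)) (v i)
        = ∑ i ∈ Finset.range (k + 2), sdist (v ((i : Fin (k + 2)) - 1)) (v (i : Fin (k + 2))) := by
      rw [← Fin.sum_univ_eq_sum_range
        (fun j : ℕ => sdist (v ((j : Fin (k + 2)) - 1)) (v (j : Fin (k + 2)))) (k + 2)]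
      exact Fintype.sum_congr _ _ fun i => by rw [Fin.cast_val_eq_self]
    have hr1 : ∑ i ∈ Finset.range (k + 2), sdist (v ((i : Fin (k + 2)) - 1)) (v (i : Fin (k + 2)))
        = (∑ i ∈ Finset.range (k + 1),
            sdist (v (((i + 1 : ℕ) : Fin (k + 2)) - 1)) (v ((i + 1 : ℕ) : Fin (k + 2))))
          + sdist (v (((0 : ℕ) : Fin (k + 2)) - 1)) (v ((0 : ℕ) : Fin (k + 2))) :=
      Finset.sum_range_succ'
        (fun j : ℕ => sdist (v ((j : Fin (k + 2)) - 1)) (v (j : Fin (k + 2)))) (k + 1)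
    have hr2 : ∑ i ∈ Finset.range (k + 1),
          sdist (v (((i + 1 : ℕ) : Fin (k + 2)) - 1)) (v ((i + 1 : ℕ) : Fin (k + 2)))
        = (∑ i ∈ Finset.range k,
            sdist (v (((i + 1 + 1 : ℕ) : Fin (k + 2)) - 1)) (v ((i + 1 + 1 : ℕ) : Fin (k + 2))))
          + sdist (v (((0 + 1 : ℕ) : Fin (k + 2)) - 1)) (v ((0 + 1 : ℕ) : Fin (k + 2))) :=
      Finset.sum_range_succ'
        (fun j : ℕ => sdist (v (((j + 1 : ℕ) : Fin (k + 2)) - 1)) (v ((j + 1 : ℕ) : Fin (k + 2)))) k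
    rw [hfin, hr1, hr2]
    have e0 : sdist (v (((0 : ℕ) : Fin (k + 2)) - 1)) (v ((0 : ℕ) : Fin (k + 2)))
        = sdist (v (0 - 1)) (v 0) := by norm_num
    have e1 : sdist (v (((0 + 1 : ℕ) : Fin (k + 2)) - 1)) (v ((0 + 1 : ℕ) : Fin (k + 2)))
        = sdist (v 0) (v 1) := by norm_num
    have e2 : ∀ i ∈ Finset.range k,
        sdist (v (((i + 1 + 1 : ℕ) : Fin (k + 2)) - 1)) (v ((i + 1 + 1 : ℕ) : Fin (k + 2)))
          = sdist (V i) (V (i + 1)) := by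
      intro i _
      simp only [hVdef]
      have c1 : ((i + 1 + 1 : ℕ) : Fin (k + 2)) - 1 = ((i + 1 : ℕ) : Fin (k + 2)) := by
        push_cast; try ring
      rw [c1]
    rw [Finset.sum_congr rfl e2, e0, e1]
    try ring
  rw [hper, hperim]
  -- Step 5 : conclude via two triangle inequalities through `-(v 0)`
  have t1 : sdist (v 0) (-(v 0)) ≤ sdist (v 0) (v 1) + sdist (v 1) (-(v 0)) :=
    SphericalFenchel.sdist_triangle (hvu 0) (hvu 1) hnegnorm
  have t2 : sdist (-(v 0)) (v 0) ≤ sdist (-(v 0)) (v (0 - 1)) + sdist (v (0 - 1)) (v 0) :=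
    SphericalFenchel.sdist_triangle hnegnorm (hvu _) (hvu 0)
  have e1 : sdist (v 0) (-(v 0)) = π := SphericalFenchel.sdist_neg_self (hvu 0)
  have e2 : sdist (-(v 0)) (v 0) = π := SphericalFenchel.sdist_neg_self' (hvu 0)
  linarith
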